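/- The jaw order J is a trapezoid order; that is, there exist functions l, r, L, R : {1,2,3,B,C,D,E,F,G} → ℝ with l x ≤ r x and L x ≤ R x for every x, such that for all x, y: x ≺ y in J if and only if r x < l y and R x < L y. -/
import Mathlib


/-- The nine elements {1, 2, 3, B, C, D, E, F, G} of the jaw order. -/
inductive JawElt : Type
  | e1 | e2 | e3 | B | C | D | E | F | G
  deriving DecidableEq

open JawElt

/-- The jaw order: its strict comparabilities are exactly
1≺2, 2≺3, 1≺3, 1≺D, B≺C, B≺D, E≺D, E≺F, F≺G, E≺G, E≺3. -/
def jawLT : JawElt → JawElt → Prop := fun u v =>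
  (u, v) ∈ ([(e1, e2), (e2, e3), (e1, e3), (e1, D), (B, C), (B, D),
    (E, D), (E, F), (F, G), (E, G), (E, e3)] : List (JawElt × JawElt))

def jl : JawElt → ℝ
  | e1 => 3 | e2 => 5 | e3 => 6 | B => 3 | C => 7 | D => 10 | E => 0 | F => 3 | G => 4

def jr : JawElt → ℝ
  | e1 => 4 | e2 => 5 | e3 => 9 | B => 6 | C => 9 | D => 10 | E => 0 | F => 3 | G => 7

def jL : JawElt → ℝ
  | e1 => 0 | e2 => 5 | e3 => 8 | B => 0 | C => 3 | D => 6 | E => 4 | F => 8 | G => 10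

def jR : JawElt → ℝ
  | e1 => 4 | e2 => 7 | e3 => 9 | B => 2 | C => 9 | D => 7 | E => 5 | F => 8 | G => 10

/-- The jaw order is a trapezoid order: it has a trapezoid representation. -/
theorem jaw_is_trapezoid_order :
    ∃ l r L R : JawElt → ℝ,
      (∀ u, l u ≤ r u) ∧ (∀ u, L u ≤ R u) ∧
      (∀ u v, jawLT u v ↔ (r u < l v ∧ R u < L v)) := by
  refine ⟨jl, jr, jL, jR, ?_, ?_, ?_⟩
  · intro u; cases u <;> norm_num [jl, jr]
  · intro u; cases u <;> norm_num [jL, jR]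
  · intro u v; cases u <;> cases v <;> simp [jawLT, jl, jr, jL, jR] <;> norm_num
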